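/- arXiv:2205.13710 — 2 statements merged into one kernel-verified Lean document; each statement's English description precedes it below -/
import Mathlib

section
/- The Rényi divergence of order α > 1 is jointly quasi-convex: for probability measures μ, ν, μ', ν' on a measurable space and λ ∈ [0,1], D_α(λμ + (1−λ)μ' ‖ λν + (1−λ)ν') ≤ max(D_α(μ ‖ ν), D_α(μ' ‖ ν')). -/
open MeasureTheory ProbabilityTheory
open scoped NNReal ENNReal

open scoped Classical in
/-- Rényi divergence of order `α`: `(α-1)⁻¹ log ∫ (dμ/dν)^α dν` for `α ≠ 1` (with the
KL divergence as the `α = 1` case), and `⊤` when `μ` is not absolutely continuous w.r.t. `ν`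
or the defining integral is infinite. -/
noncomputable def renyiDiv {Ω : Type*} [MeasurableSpace Ω] (α : ℝ) (μ ν : Measure Ω) : EReal :=
  if μ ≪ ν then
    if α = 1 then ((∫ x, Real.log ((μ.rnDeriv ν x).toReal) ∂μ : ℝ) : EReal)
    else if (∫⁻ x, (μ.rnDeriv ν x) ^ α ∂ν) = ∞ then ⊤
    else (((α - 1)⁻¹ * Real.log ((∫⁻ x, (μ.rnDeriv ν x) ^ α ∂ν).toReal) : ℝ) : EReal)
  else ⊤

/-- Key integral inequality: joint convexity of the Hellinger-type integral. -/
lemma renyi_aux_integral_le {Ω : Type*} [MeasurableSpace Ω] (μ ν μ' ν' : Measure Ω)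
    [IsFiniteMeasure μ] [IsFiniteMeasure ν] [IsFiniteMeasure μ'] [IsFiniteMeasure ν']
    (hμν : μ ≪ ν) (hμν' : μ' ≪ ν') {L L' : ℝ≥0∞} (hL0 : L ≠ 0) (hL'0 : L' ≠ 0)
    (hLt : L ≠ ∞) (hL't : L' ≠ ∞) {α : ℝ} (hα : 1 ≤ α) :
    ∫⁻ x, ((L • μ + L' • μ').rnDeriv (L • ν + L' • ν') x) ^ α ∂(L • ν + L' • ν') ≤
      L * ∫⁻ x, (μ.rnDeriv ν x) ^ α ∂ν + L' * ∫⁻ x, (μ'.rnDeriv ν' x) ^ α ∂ν' := by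
  set ν₂ : Measure Ω := L • ν + L' • ν' with hν₂
  have hLν : IsFiniteMeasure (L • ν) := ⟨by
    rw [Measure.smul_apply, smul_eq_mul]
    exact ENNReal.mul_lt_top hLt.lt_top (measure_lt_top ν _)⟩
  have hL'ν : IsFiniteMeasure (L' • ν') := ⟨by
    rw [Measure.smul_apply, smul_eq_mul]
    exact ENNReal.mul_lt_top hL't.lt_top (measure_lt_top ν' _)⟩
  have hLμ : IsFiniteMeasure (L • μ) := ⟨by
    rw [Measure.smul_apply, smul_eq_mul]
    exact ENNReal.mul_lt_top hLt.lt_top (measure_lt_top μ _)⟩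
  have hL'μ : IsFiniteMeasure (L' • μ') := ⟨by
    rw [Measure.smul_apply, smul_eq_mul]
    exact ENNReal.mul_lt_top hL't.lt_top (measure_lt_top μ' _)⟩
  have hν2fin : IsFiniteMeasure ν₂ := by rw [hν₂]; infer_instance
  have hνν₂ : ν ≪ ν₂ := (Measure.absolutelyContinuous_smul hL0).add_right _
  have hν'ν₂ : ν' ≪ ν₂ := by
    rw [hν₂, add_comm]
    exact (Measure.absolutelyContinuous_smul hL'0).add_right _
  -- rnDeriv of the mixture
  have hd : (L • μ + L' • μ').rnDeriv ν₂ =ᵐ[ν₂]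
      fun x => L * μ.rnDeriv ν₂ x + L' * μ'.rnDeriv ν₂ x := by
    filter_upwards [Measure.rnDeriv_add (L • μ) (L' • μ') ν₂,
      Measure.rnDeriv_smul_left_of_ne_top μ ν₂ hLt,
      Measure.rnDeriv_smul_left_of_ne_top μ' ν₂ hL't] with x h1 h2 h3
    rw [h1, Pi.add_apply, h2, h3]
    simp [mul_comm]
  have hb : (fun x => L * ν.rnDeriv ν₂ x + L' * ν'.rnDeriv ν₂ x) =ᵐ[ν₂] fun _ => 1 := by
    have h0 : (L • ν + L' • ν').rnDeriv ν₂ =ᵐ[ν₂]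
        fun x => L * ν.rnDeriv ν₂ x + L' * ν'.rnDeriv ν₂ x := by
      filter_upwards [Measure.rnDeriv_add (L • ν) (L' • ν') ν₂,
        Measure.rnDeriv_smul_left_of_ne_top ν ν₂ hLt,
        Measure.rnDeriv_smul_left_of_ne_top ν' ν₂ hL't] with x h1 h2 h3
      rw [h1, Pi.add_apply, h2, h3]
      simp [mul_comm]
    exact h0.symm.trans (hν₂ ▸ Measure.rnDeriv_self ν₂)
  have hfb : μ.rnDeriv ν * ν.rnDeriv ν₂ =ᵐ[ν₂] μ.rnDeriv ν₂ :=
    Measure.rnDeriv_mul_rnDeriv hμν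
  have hfb' : μ'.rnDeriv ν' * ν'.rnDeriv ν₂ =ᵐ[ν₂] μ'.rnDeriv ν₂ :=
    Measure.rnDeriv_mul_rnDeriv hμν'
  -- pointwise bound
  have hpt : ∀ᵐ x ∂ν₂, ((L • μ + L' • μ').rnDeriv ν₂ x) ^ α ≤
      L * (ν.rnDeriv ν₂ x * (μ.rnDeriv ν x) ^ α)
        + L' * (ν'.rnDeriv ν₂ x * (μ'.rnDeriv ν' x) ^ α) := by
    filter_upwards [hd, hb, hfb, hfb'] with x h1 h2 h3 h4
    rw [h1, ← h3, ← h4, Pi.mul_apply, Pi.mul_apply]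
    have key := ENNReal.rpow_arith_mean_le_arith_mean2_rpow
      (L * ν.rnDeriv ν₂ x) (L' * ν'.rnDeriv ν₂ x)
      (μ.rnDeriv ν x) (μ'.rnDeriv ν' x) h2 hα
    calc (L * (μ.rnDeriv ν x * ν.rnDeriv ν₂ x) + L' * (μ'.rnDeriv ν' x * ν'.rnDeriv ν₂ x)) ^ α
        = (L * ν.rnDeriv ν₂ x * μ.rnDeriv ν x + L' * ν'.rnDeriv ν₂ x * μ'.rnDeriv ν' x) ^ α := by
          ring_nf
      _ ≤ L * ν.rnDeriv ν₂ x * (μ.rnDeriv ν x) ^ α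
            + L' * ν'.rnDeriv ν₂ x * (μ'.rnDeriv ν' x) ^ α := key
      _ = L * (ν.rnDeriv ν₂ x * (μ.rnDeriv ν x) ^ α)
            + L' * (ν'.rnDeriv ν₂ x * (μ'.rnDeriv ν' x) ^ α) := by ring_nf
  have hm1 : Measurable fun x => ν.rnDeriv ν₂ x * (μ.rnDeriv ν x) ^ α :=
    (Measure.measurable_rnDeriv ν ν₂).mul ((Measure.measurable_rnDeriv μ ν).pow_const α)
  have hm2 : Measurable fun x => ν'.rnDeriv ν₂ x * (μ'.rnDeriv ν' x) ^ α :=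
    (Measure.measurable_rnDeriv ν' ν₂).mul ((Measure.measurable_rnDeriv μ' ν').pow_const α)
  calc ∫⁻ x, ((L • μ + L' • μ').rnDeriv ν₂ x) ^ α ∂ν₂
      ≤ ∫⁻ x, (L * (ν.rnDeriv ν₂ x * (μ.rnDeriv ν x) ^ α)
          + L' * (ν'.rnDeriv ν₂ x * (μ'.rnDeriv ν' x) ^ α)) ∂ν₂ := lintegral_mono_ae hpt
    _ = L * ∫⁻ x, ν.rnDeriv ν₂ x * (μ.rnDeriv ν x) ^ α ∂ν₂
          + L' * ∫⁻ x, ν'.rnDeriv ν₂ x * (μ'.rnDeriv ν' x) ^ α ∂ν₂ := by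
        rw [lintegral_add_left (hm1.const_mul L), lintegral_const_mul L hm1,
          lintegral_const_mul L' hm2]
    _ = L * ∫⁻ x, (μ.rnDeriv ν x) ^ α ∂ν + L' * ∫⁻ x, (μ'.rnDeriv ν' x) ^ α ∂ν' := by
        rw [lintegral_rnDeriv_mul hνν₂
            ((Measure.measurable_rnDeriv μ ν).pow_const α).aemeasurable,
          lintegral_rnDeriv_mul hν'ν₂
            ((Measure.measurable_rnDeriv μ' ν').pow_const α).aemeasurable]

/-- **Joint quasi-convexity of the Rényi divergence** (order `α > 1`): the divergence between
mixtures `λμ + (1-λ)μ'` and `λν + (1-λ)ν'` is at most the max of the componentwise divergences. -/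
theorem renyiDiv_quasiConvex {Ω : Type*} [MeasurableSpace Ω]
    (μ ν μ' ν' : Measure Ω) [IsProbabilityMeasure μ] [IsProbabilityMeasure ν]
    [IsProbabilityMeasure μ'] [IsProbabilityMeasure ν']
    (α lam : ℝ) (hα : 1 < α) (hlam : lam ∈ Set.Icc (0 : ℝ) 1) :
    renyiDiv α (ENNReal.ofReal lam • μ + ENNReal.ofReal (1 - lam) • μ')
        (ENNReal.ofReal lam • ν + ENNReal.ofReal (1 - lam) • ν') ≤
      max (renyiDiv α μ ν) (renyiDiv α μ' ν') := by
  obtain ⟨hlam0, hlam1⟩ := hlam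
  have hα1 : α ≠ 1 := ne_of_gt hα
  rcases eq_or_lt_of_le hlam0 with h0 | h0
  · -- lam = 0
    simp only [← h0, ENNReal.ofReal_zero, zero_smul, zero_add, sub_zero, ENNReal.ofReal_one,
      one_smul]
    exact le_max_right _ _
  rcases eq_or_lt_of_le hlam1 with h1 | h1
  · -- lam = 1
    simp only [h1, ENNReal.ofReal_one, one_smul, sub_self, ENNReal.ofReal_zero, zero_smul,
      add_zero]
    exact le_max_left _ _
  -- 0 < lam < 1
  set L : ℝ≥0∞ := ENNReal.ofReal lam with hL
  set L' : ℝ≥0∞ := ENNReal.ofReal (1 - lam) with hL'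
  have hL0 : L ≠ 0 := by simp [hL, ENNReal.ofReal_eq_zero, not_le, h0]
  have hL'0 : L' ≠ 0 := by simp [hL', ENNReal.ofReal_eq_zero, not_le, h1]
  have hLt : L ≠ ∞ := ENNReal.ofReal_ne_top
  have hL't : L' ≠ ∞ := ENNReal.ofReal_ne_top
  have hsum : L + L' = 1 := by
    rw [hL, hL', ← ENNReal.ofReal_add hlam0 (by linarith), add_sub_cancel, ENNReal.ofReal_one]
  by_cases hac1 : μ ≪ ν
  swap
  · rw [show renyiDiv α μ ν = ⊤ by rw [renyiDiv, if_neg hac1]]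
    simp
  by_cases hac2 : μ' ≪ ν'
  swap
  · rw [show renyiDiv α μ' ν' = ⊤ by rw [renyiDiv, if_neg hac2]]
    simp
  set I₁ : ℝ≥0∞ := ∫⁻ x, (μ.rnDeriv ν x) ^ α ∂ν with hI₁
  set I₂ : ℝ≥0∞ := ∫⁻ x, (μ'.rnDeriv ν' x) ^ α ∂ν' with hI₂
  by_cases hItop1 : I₁ = ∞
  · rw [show renyiDiv α μ ν = ⊤ by rw [renyiDiv, if_pos hac1, if_neg hα1, if_pos hItop1]]
    simp
  by_cases hItop2 : I₂ = ∞
  · rw [show renyiDiv α μ' ν' = ⊤ by rw [renyiDiv, if_pos hac2, if_neg hα1, if_pos hItop2]]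
    simp
  set μ₂ : Measure Ω := L • μ + L' • μ' with hμ₂
  set ν₂ : Measure Ω := L • ν + L' • ν' with hν₂def
  have hνν₂ : ν ≪ ν₂ := (Measure.absolutelyContinuous_smul hL0).add_right _
  have hν'ν₂ : ν' ≪ ν₂ := by
    rw [hν₂def, add_comm]
    exact (Measure.absolutelyContinuous_smul hL'0).add_right _
  have hac : μ₂ ≪ ν₂ :=
    Measure.AbsolutelyContinuous.add_left ((hac1.trans hνν₂).smul_left L)
      ((hac2.trans hν'ν₂).smul_left L')
  set I : ℝ≥0∞ := ∫⁻ x, (μ₂.rnDeriv ν₂ x) ^ α ∂ν₂ with hIdef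
  have hkey : I ≤ L * I₁ + L' * I₂ :=
    renyi_aux_integral_le μ ν μ' ν' hac1 hac2 hL0 hL'0 hLt hL't hα.le
  have hImax : I ≤ max I₁ I₂ := by
    refine hkey.trans ?_
    calc L * I₁ + L' * I₂ ≤ L * max I₁ I₂ + L' * max I₁ I₂ := by
          gcongr
          exacts [le_max_left _ _, le_max_right _ _]
      _ = (L + L') * max I₁ I₂ := by rw [add_mul]
      _ = max I₁ I₂ := by rw [hsum, one_mul]
  have hmaxtop : max I₁ I₂ ≠ ∞ := by
    simp [hItop1, hItop2]
  have hItop : I ≠ ∞ := fun h => hmaxtop (top_le_iff.mp (h ▸ hImax))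
  -- I > 0
  have hν2fin : IsFiniteMeasure ν₂ := by
    constructor
    rw [hν₂def, Measure.add_apply, Measure.smul_apply, Measure.smul_apply, smul_eq_mul,
      smul_eq_mul]
    exact ENNReal.add_lt_top.mpr ⟨ENNReal.mul_lt_top hLt.lt_top (measure_lt_top ν _),
      ENNReal.mul_lt_top hL't.lt_top (measure_lt_top ν' _)⟩
  have hμ₂univ : μ₂ Set.univ = 1 := by
    rw [hμ₂, Measure.add_apply, Measure.smul_apply, Measure.smul_apply, smul_eq_mul, smul_eq_mul,
      measure_univ, measure_univ, mul_one, mul_one, hsum]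
  have hI0 : I ≠ 0 := by
    intro h
    have hae := (lintegral_eq_zero_iff ((Measure.measurable_rnDeriv μ₂ ν₂).pow_const α)).mp
        (hIdef ▸ h)
    have hae2 : ∀ᵐ x ∂ν₂, μ₂.rnDeriv ν₂ x = 0 := by
      filter_upwards [hae] with x hx
      simp only [Pi.zero_apply] at hx
      rcases ENNReal.rpow_eq_zero_iff.mp hx with ⟨h', _⟩ | ⟨_, h'⟩
      · exact h'
      · linarith
    have : ∫⁻ x, μ₂.rnDeriv ν₂ x ∂ν₂ = 0 := lintegral_eq_zero_iff
      (Measure.measurable_rnDeriv μ₂ ν₂) |>.mpr hae2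
    rw [Measure.lintegral_rnDeriv hac, hμ₂univ] at this
    exact one_ne_zero this
  have hIpos : 0 < I.toReal := ENNReal.toReal_pos hI0 hItop
  -- unfold renyiDiv
  have e2 : renyiDiv α μ ν = (((α - 1)⁻¹ * Real.log I₁.toReal : ℝ) : EReal) := by
    rw [renyiDiv, if_pos hac1, if_neg hα1, if_neg hItop1]
  have e3 : renyiDiv α μ' ν' = (((α - 1)⁻¹ * Real.log I₂.toReal : ℝ) : EReal) := by
    rw [renyiDiv, if_pos hac2, if_neg hα1, if_neg hItop2]
  have e1 : renyiDiv α μ₂ ν₂ = (((α - 1)⁻¹ * Real.log I.toReal : ℝ) : EReal) := by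
    rw [renyiDiv, if_pos hac, if_neg hα1, if_neg hItop]
  rw [e1, e2, e3]
  have hc : (0 : ℝ) ≤ (α - 1)⁻¹ := inv_nonneg.mpr (by linarith)
  rcases le_total I₁ I₂ with hcmp | hcmp
  · refine le_trans ?_ (le_max_right _ _)
    rw [EReal.coe_le_coe_iff]
    have hIle : I.toReal ≤ I₂.toReal :=
      ENNReal.toReal_le_toReal hItop hItop2 |>.mpr (hImax.trans_eq (max_eq_right hcmp))
    exact mul_le_mul_of_nonneg_left (Real.log_le_log hIpos hIle) hc
  · refine le_trans ?_ (le_max_left _ _)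
    rw [EReal.coe_le_coe_iff]
    have hIle : I.toReal ≤ I₁.toReal :=
      ENNReal.toReal_le_toReal hItop hItop1 |>.mpr (hImax.trans_eq (max_eq_left hcmp))
    exact mul_le_mul_of_nonneg_left (Real.log_le_log hIpos hIle) hc
end

section
/- If an algorithm satisfies (α, ε_α)-Rényi differential privacy for some α > 1, then it satisfies (ε_δ, δ)-differential privacy for every δ ∈ (0,1) with ε_δ = ε_α + log(1/δ)/(α−1). Equivalently: if D_α(μ ‖ ν) ≤ ε_α for probability measures μ, ν, then for every measurable set S, μ(S) ≤ e^{ε_α + log(1/δ)/(α−1)} ν(S) + δ. -/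
open MeasureTheory ProbabilityTheory
open scoped NNReal ENNReal

/-- **RDP-to-DP conversion**: if `D_α(μ‖ν) ≤ ε_α` for some `α > 1`, then for every
`δ ∈ (0,1)` and every measurable set `S`,
`μ(S) ≤ exp(ε_α + log(1/δ)/(α-1)) · ν(S) + δ`. -/
theorem rdp_to_dp {Ω : Type*} [MeasurableSpace Ω]
    (μ ν : Measure Ω) [IsProbabilityMeasure μ] [IsProbabilityMeasure ν]
    (α εα δ : ℝ) (hα : 1 < α) (hδ : δ ∈ Set.Ioo (0 : ℝ) 1)
    (h : renyiDiv α μ ν ≤ (εα : EReal)) :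
    ∀ S : Set Ω, MeasurableSet S →
      μ S ≤ ENNReal.ofReal (Real.exp (εα + Real.log (1 / δ) / (α - 1))) * ν S
        + ENNReal.ofReal δ := by
  intro S hS
  classical
  by_cases hac : μ ≪ ν
  swap
  · rw [renyiDiv, if_neg hac] at h
    exact absurd (top_le_iff.mp h) (EReal.coe_ne_top εα)
  have hα1 : α ≠ 1 := ne_of_gt hα
  rw [renyiDiv, if_pos hac, if_neg hα1] at h
  by_cases hI : (∫⁻ x, (μ.rnDeriv ν x) ^ α ∂ν) = ∞
  · rw [if_pos hI] at h
    exact absurd h (by simp)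
  rw [if_neg hI] at h
  set f := μ.rnDeriv ν with hf
  set I := ∫⁻ x, f x ^ α ∂ν with hIdef
  have hα1' : (0 : ℝ) < α - 1 := by linarith
  have hδ0 : (0 : ℝ) < δ := hδ.1
  have hlog : (α - 1)⁻¹ * Real.log I.toReal ≤ εα := by exact_mod_cast h
  set C : ℝ := Real.exp ((α - 1) * εα) with hC
  have hIle : I ≤ ENNReal.ofReal C := by
    rcases eq_or_ne I 0 with h0 | h0
    · simp [h0]
    have hIpos : 0 < I.toReal := ENNReal.toReal_pos h0 hI
    have h1 : Real.log I.toReal ≤ (α - 1) * εα := by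
      have := mul_le_mul_of_nonneg_left hlog (le_of_lt hα1')
      rwa [← mul_assoc, mul_inv_cancel₀ (ne_of_gt hα1'), one_mul] at this
    have h2 : I.toReal ≤ C := (Real.log_le_iff_le_exp hIpos).mp h1
    rw [← ENNReal.ofReal_toReal hI]
    exact ENNReal.ofReal_le_ofReal h2
  set t : ℝ := Real.exp (εα + Real.log (1 / δ) / (α - 1)) with ht
  set T : ℝ≥0∞ := ENNReal.ofReal t with hT
  have htpos : 0 < t := Real.exp_pos _
  have hTpow : T ^ (α - 1) = ENNReal.ofReal (C / δ) := by
    rw [hT, ENNReal.ofReal_rpow_of_pos htpos]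
    congr 1
    rw [Real.rpow_def_of_pos htpos, ht, Real.log_exp]
    rw [hC, div_eq_mul_inv C δ, ← Real.exp_log (show (0:ℝ) < δ⁻¹ by positivity), ← Real.exp_add]
    congr 1
    rw [Real.log_inv, one_div, Real.log_inv]
    field_simp
  -- the level set
  set A : Set Ω := {x | f x ≤ T} with hA
  have hfm : Measurable f := μ.measurable_rnDeriv ν
  have hAm : MeasurableSet A := measurableSet_le hfm measurable_const
  -- bound on S ∩ A
  have hbound1 : μ (S ∩ A) ≤ T * ν S := by
    rw [← Measure.setLIntegral_rnDeriv hac]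
    calc ∫⁻ x in S ∩ A, f x ∂ν ≤ ∫⁻ _ in S ∩ A, T ∂ν := by
          refine setLIntegral_mono measurable_const fun x hx => hx.2
      _ = T * ν (S ∩ A) := by rw [setLIntegral_const]
      _ ≤ T * ν S := mul_le_mul_right (measure_mono Set.inter_subset_left) _
  -- bound on Aᶜ via Markov
  have hbound2 : μ Aᶜ ≤ ENNReal.ofReal δ := by
    have key : T ^ (α - 1) * μ Aᶜ ≤ ENNReal.ofReal C := by
      rw [← Measure.setLIntegral_rnDeriv hac, ← lintegral_const_mul _ hfm]
      calc ∫⁻ x in Aᶜ, T ^ (α - 1) * f x ∂ν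
          ≤ ∫⁻ x in Aᶜ, f x ^ α ∂ν := by
            refine setLIntegral_mono (hfm.pow_const α) fun x hx => ?_
            have hxT : T < f x := lt_of_not_ge hx
            calc T ^ (α - 1) * f x ≤ f x ^ (α - 1) * f x :=
                  mul_le_mul_left (ENNReal.rpow_le_rpow hxT.le hα1'.le) _
              _ = f x ^ α := by
                  nth_rewrite 2 [← ENNReal.rpow_one (f x)]
                  rw [← ENNReal.rpow_add_of_nonneg _ _ hα1'.le zero_le_one]
                  norm_num
        _ ≤ I := lintegral_mono_set (Set.subset_univ _) |>.trans_eq (by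
              rw [hIdef, Measure.restrict_univ])
        _ ≤ ENNReal.ofReal C := hIle
    rw [hTpow] at key
    have hCpos : 0 < C := Real.exp_pos _
    have hsplit : ENNReal.ofReal (C / δ) = ENNReal.ofReal C * ENNReal.ofReal δ⁻¹ := by
      rw [← ENNReal.ofReal_mul hCpos.le, div_eq_mul_inv]
    rw [hsplit, mul_assoc] at key
    have hcancel : ENNReal.ofReal δ⁻¹ * μ Aᶜ ≤ 1 :=
      (ENNReal.mul_le_mul_iff_right (a := ENNReal.ofReal C)
        (by simpa using hCpos) ENNReal.ofReal_ne_top).mp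
        (key.trans_eq (mul_one _).symm)
    -- hcancel : ENNReal.ofReal δ⁻¹ * μ Aᶜ ≤ 1
    rw [ENNReal.ofReal_inv_of_pos hδ0] at hcancel
    have hδne : ENNReal.ofReal δ ≠ 0 := by simpa using hδ0
    calc μ Aᶜ = ENNReal.ofReal δ * ((ENNReal.ofReal δ)⁻¹ * μ Aᶜ) := by
          rw [← mul_assoc, ENNReal.mul_inv_cancel hδne ENNReal.ofReal_ne_top, one_mul]
      _ ≤ ENNReal.ofReal δ * 1 := mul_le_mul_right hcancel _
      _ = ENNReal.ofReal δ := mul_one _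
  calc μ S ≤ μ (S ∩ A) + μ (S \ A) := measure_le_inter_add_diff μ S A
    _ ≤ μ (S ∩ A) + μ Aᶜ := add_le_add_right (measure_mono (Set.diff_subset_compl S A)) _
    _ ≤ T * ν S + ENNReal.ofReal δ := add_le_add hbound1 hbound2
end
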